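/- Let d ≥ 1, ε > 0, and T > (2d + 1)·ε. Partition ℝ^d into axis-parallel hypercubes of side length T with corners in T·ℤ^d. For 0 ≤ i ≤ d − 1, let 𝒜_i denote the union of all i-dimensional faces of these hypercubes (a face is obtained by fixing d − i coordinates at integer multiples of T and letting each remaining coordinate range over an interval [T·a, T·(a+1)] with a ∈ ℤ), set l_j := (d − j)·ε, let N_j^∞(A) be the ℓ∞-neighborhood of A of radius l_j, and let B_{≤ m} := ⋃_{j ≤ m} N_j^∞(𝒜_j) (with B_{≤ −1} := ∅). Then for every integer 0 ≤ i ≤ d − 1 and every two distinct i-dimensional faces Q₁ and Q₂ of the hypercubes, the Euclidean distance between N_i^∞(Q₁) \ B_{≤ i−1} and N_i^∞(Q₂) \ B_{≤ i−1} is strictly greater than ε. -/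

import Mathlib

/-- The `i`-dimensional face of the grid of hypercubes of side `T` determined
by the set `A` of free coordinates (`|A| = i`) and the base corner `T·z`:
coordinates in `A` range over `[T·z_k, T·z_k + T]`, the others are fixed. -/
def face (d : ℕ) (T : ℝ) (A : Finset (Fin d)) (z : Fin d → ℤ) :
    Set (EuclideanSpace ℝ (Fin d)) :=
  {x | (∀ k ∈ A, T * (z k : ℝ) ≤ x k ∧ x k ≤ T * (z k : ℝ) + T) ∧
       ∀ k ∉ A, x k = T * (z k : ℝ)}

/-- `𝒜_j`: the union of all `j`-dimensional faces of the grid hypercubes. -/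
def gridFaces (d : ℕ) (T : ℝ) (j : ℕ) : Set (EuclideanSpace ℝ (Fin d)) :=
  {x | ∃ A : Finset (Fin d), ∃ z : Fin d → ℤ, A.card = j ∧ x ∈ face d T A z}

/-- The `ℓ∞`-neighborhood of radius `l_j := (d−j)·ε` of a set `S ⊆ ℝ^d`. -/
def linfNbhdLevel (d : ℕ) (ε : ℝ) (j : ℕ) (S : Set (EuclideanSpace ℝ (Fin d))) :
    Set (EuclideanSpace ℝ (Fin d)) :=
  {x | ∃ a ∈ S, ∀ k, |x k - a k| ≤ ((d : ℝ) - j) * ε}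

/-- `B_{≤ i−1} = ⋃_{j ≤ i−1} N_j^∞(𝒜_j)` (empty for `i = 0`). -/
def Blt (d : ℕ) (T ε : ℝ) (i : ℕ) : Set (EuclideanSpace ℝ (Fin d)) :=
  {x | ∃ j < i, x ∈ linfNbhdLevel d ε j (gridFaces d T j)}

/-- The Euclidean distance between two sets. -/
noncomputable def setDist {α : Type*} [PseudoMetricSpace α] (A B : Set α) : ℝ :=
  sInf {r : ℝ | ∃ a ∈ A, ∃ b ∈ B, r = dist a b}

/-- Key escape lemma: a point in the `l_i`-neighborhood of an `i`-face that is
not in `B_{≤ i−1}` has all its free coordinates farther than `l_i + ε` from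
every multiple of `T`. -/
lemma escape (d : ℕ) (ε T : ℝ) (hε : 0 < ε) (hT0 : 0 < T)
    (i : ℕ) (A : Finset (Fin d)) (z : Fin d → ℤ) (hA : A.card = i)
    (x : EuclideanSpace ℝ (Fin d))
    (hmem : x ∈ linfNbhdLevel d ε i (face d T A z)) (hB : x ∉ Blt d T ε i)
    (k : Fin d) (hk : k ∈ A) (m : ℤ) :
    ((d:ℝ) - i) * ε + ε < |x k - T * m| := by
  by_contra hcon
  push_neg at hcon
  apply hB
  have hi1 : 1 ≤ i := by
    rw [← hA]; exact Finset.card_pos.mpr ⟨k, hk⟩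
  obtain ⟨a, ⟨haf1, haf2⟩, hax⟩ := hmem
  have hcast : ((i - 1 : ℕ) : ℝ) = (i : ℝ) - 1 := by
    push_cast [hi1]; ring
  refine ⟨i - 1, by omega,
    (WithLp.toLp 2 (fun k' => if k' ∈ A.erase k then x k' else
      if k' = k then T * m else T * (z k' : ℝ)) : EuclideanSpace ℝ (Fin d)),
    ⟨A.erase k,
      (fun k' => if k' ∈ A.erase k then ⌊x k' / T⌋ else if k' = k then m else z k'),
      by rw [Finset.card_erase_of_mem hk, hA], ?_, ?_⟩, ?_⟩
  · -- face conditions, free part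
    intro k' hk'
    simp only [WithLp.ofLp_toLp, hk', if_true]
    constructor
    · rw [mul_comm]
      exact (le_div_iff₀ hT0).mp (Int.floor_le _)
    · have := (div_lt_iff₀ hT0).mp (Int.lt_floor_add_one (x k' / T))
      nlinarith
  · -- face conditions, fixed part
    intro k' hk'
    simp only [WithLp.ofLp_toLp, hk', if_false]
    split_ifs <;> rfl
  · -- the ℓ∞ bound
    intro k'
    have hRHS : ((d:ℝ) - (i - 1 : ℕ)) * ε = ((d:ℝ) - i) * ε + ε := by
      rw [hcast]; ring
    rw [hRHS]
    by_cases h1 : k' ∈ A.erase k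
    · simp only [WithLp.ofLp_toLp, h1, if_true, sub_self, abs_zero]
      have hid : (i : ℝ) ≤ d := by
        exact_mod_cast hA ▸ (Finset.card_le_univ A).trans_eq (by simp)
      nlinarith
    · simp only [WithLp.ofLp_toLp, h1, if_false]
      by_cases h2 : k' = k
      · subst h2; simp only [if_true]; exact hcon
      · simp only [h2, if_false]
        have hk'A : k' ∉ A := fun hmem' => h1 (Finset.mem_erase.mpr ⟨h2, hmem'⟩)
        have := hax k'
        rw [haf2 k' hk'A] at this
        linarith

/-- Interval form of the escape lemma. -/
lemma escape_interval (d : ℕ) (ε T : ℝ) (hε : 0 < ε) (hT0 : 0 < T)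
    (i : ℕ) (A : Finset (Fin d)) (z : Fin d → ℤ) (hA : A.card = i)
    (x : EuclideanSpace ℝ (Fin d))
    (hmem : x ∈ linfNbhdLevel d ε i (face d T A z)) (hB : x ∉ Blt d T ε i)
    (k : Fin d) (hk : k ∈ A) :
    T * z k + ((d:ℝ) - i) * ε + ε < x k ∧
      x k < T * z k + T - ((d:ℝ) - i) * ε - ε := by
  obtain ⟨a, ⟨haf1, haf2⟩, hax⟩ := hmem
  have hax' := hax k
  have hint := haf1 k hk
  have h1 := escape d ε T hε hT0 i A z hA x ⟨a, ⟨haf1, haf2⟩, hax⟩ hB k hk (z k)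
  have h2 := escape d ε T hε hT0 i A z hA x ⟨a, ⟨haf1, haf2⟩, hax⟩ hB k hk (z k + 1)
  push_cast at h2
  have habs := abs_sub_abs_le_abs_sub (x k) (a k)
  constructor
  · rcases lt_abs.mp h1 with h | h
    · linarith
    · rcases abs_le.mp hax' with ⟨hl, hr⟩
      linarith
  · rcases lt_abs.mp h2 with h | h
    · rcases abs_le.mp hax' with ⟨hl, hr⟩
      nlinarith
    · linarith

/-- fixed coordinates are `l_i`-close to the grid value. -/
lemma fixed_close (d : ℕ) (ε T : ℝ)
    (i : ℕ) (A : Finset (Fin d)) (z : Fin d → ℤ)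
    (x : EuclideanSpace ℝ (Fin d))
    (hmem : x ∈ linfNbhdLevel d ε i (face d T A z))
    (k : Fin d) (hk : k ∉ A) :
    |x k - T * z k| ≤ ((d:ℝ) - i) * ε := by
  obtain ⟨a, ⟨haf1, haf2⟩, hax⟩ := hmem
  have := hax k
  rwa [haf2 k hk] at this

/-- The center of a face is in its neighborhood and outside `B_{≤ i−1}`. -/
lemma center_mem (d : ℕ) (ε T : ℝ) (hε : 0 < ε) (hT : (2 * (d : ℝ) + 1) * ε < T)
    (i : ℕ) (hid : i < d) (A : Finset (Fin d)) (z : Fin d → ℤ) (hA : A.card = i) :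
    (WithLp.toLp 2 (fun k => T * (z k : ℝ) + if k ∈ A then T / 2 else 0) : EuclideanSpace ℝ (Fin d)) ∈
      linfNbhdLevel d ε i (face d T A z) \ Blt d T ε i := by
  have hd0 : (0:ℝ) ≤ (d:ℝ) := Nat.cast_nonneg d
  have hT0 : 0 < T := by nlinarith
  constructor
  · refine ⟨(WithLp.toLp 2 (fun k => T * (z k : ℝ) + if k ∈ A then T / 2 else 0) :
        EuclideanSpace ℝ (Fin d)), ⟨?_, ?_⟩, ?_⟩
    · intro k hk
      simp only [WithLp.ofLp_toLp, hk, if_true]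
      constructor <;> linarith
    · intro k hk
      simp only [WithLp.ofLp_toLp, hk, if_false, add_zero]
    · intro k
      simp only [sub_self, abs_zero]
      have : (i:ℝ) ≤ d := by exact_mod_cast hid.le
      nlinarith
  · rintro ⟨j, hj, a, ⟨A', z', hA', ⟨haf1, haf2⟩⟩, hbd⟩
    have hsub : ¬ A ⊆ A' := by
      intro hsub
      have := Finset.card_le_card hsub
      omega
    obtain ⟨k, hkA, hkA'⟩ := Finset.not_subset.mp hsub
    have hbk := hbd k
    rw [haf2 k hkA'] at hbk
    simp only [WithLp.ofLp_toLp, hkA, if_true] at hbk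
    set n : ℤ := z k - z' k with hn
    have hval : T * (z k : ℝ) + T / 2 - T * (z' k : ℝ) = T * ((n : ℝ) + 1/2) := by
      push_cast [hn]; ring
    rw [hval, abs_mul, abs_of_pos hT0] at hbk
    have hhalf : (1:ℝ)/2 ≤ |(n : ℝ) + 1/2| := by
      rcases le_or_gt 0 n with h | h
      · have : (0:ℝ) ≤ (n:ℝ) := by exact_mod_cast h
        rw [abs_of_nonneg (by linarith)]; linarith
      · have hn1 : n ≤ -1 := by omega
        have : (n:ℝ) ≤ -1 := by exact_mod_cast hn1
        rw [abs_of_nonpos (by linarith)]; linarith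
    have hj' : (0:ℝ) ≤ (j:ℝ) := Nat.cast_nonneg j
    nlinarith [abs_nonneg ((n:ℝ) + 1/2)]

lemma coord_le_dist (d : ℕ) (x y : EuclideanSpace ℝ (Fin d)) (k : Fin d) :
    |x k - y k| ≤ dist x y := by
  rw [EuclideanSpace.dist_eq, show |x k - y k| = Real.sqrt ((x k - y k)^2) from
    (Real.sqrt_sq_eq_abs _).symm]
  apply Real.sqrt_le_sqrt
  calc (x k - y k)^2 = dist (x k) (y k)^2 := by
        rw [Real.dist_eq, sq_abs]
    _ ≤ ∑ j, dist (x j) (y j)^2 :=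
        Finset.single_le_sum (f := fun j => dist (x j) (y j)^2) (fun j _ => sq_nonneg _) (Finset.mem_univ k)

lemma two_coord_le_dist (d : ℕ) (ε : ℝ) (hε : 0 ≤ ε)
    (x y : EuclideanSpace ℝ (Fin d)) (k k' : Fin d) (hkk' : k ≠ k')
    (h1 : ε ≤ |x k - y k|) (h2 : ε ≤ |x k' - y k'|) :
    Real.sqrt 2 * ε ≤ dist x y := by
  rw [EuclideanSpace.dist_eq]
  have : Real.sqrt 2 * ε = Real.sqrt (2 * ε^2) := by
    rw [Real.sqrt_mul (by norm_num), Real.sqrt_sq hε]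
  rw [this]
  apply Real.sqrt_le_sqrt
  have hsum : dist (x k) (y k)^2 + dist (x k') (y k')^2 ≤ ∑ j, dist (x j) (y j)^2 := by
    have hpair : ({k, k'} : Finset (Fin d)) ⊆ Finset.univ := Finset.subset_univ _
    calc dist (x k) (y k)^2 + dist (x k') (y k')^2
        = ∑ j ∈ ({k, k'} : Finset (Fin d)), dist (x j) (y j)^2 :=
          (Finset.sum_pair (f := fun j => dist (x j) (y j)^2) hkk').symm
      _ ≤ ∑ j, dist (x j) (y j)^2 :=
          Finset.sum_le_sum_of_subset_of_nonneg hpair (fun j _ _ => sq_nonneg _)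
  have e1 : ε^2 ≤ dist (x k) (y k)^2 := by
    rw [Real.dist_eq]
    exact pow_le_pow_left₀ hε h1 2
  have e2 : ε^2 ≤ dist (x k') (y k')^2 := by
    rw [Real.dist_eq]
    exact pow_le_pow_left₀ hε h2 2
  linarith


/-- Let `d ≥ 1`, `ε > 0`, `T > (2d+1)·ε`, and `0 ≤ i ≤ d−1`.
For every two distinct `i`-dimensional faces `Q₁, Q₂` of the grid of hypercubes
of side `T`, the Euclidean distance between `N_i^∞(Q₁) \ B_{≤ i−1}` and
`N_i^∞(Q₂) \ B_{≤ i−1}` is strictly greater than `ε`. -/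
theorem stmt_12 (d : ℕ) (hd : 1 ≤ d) (ε T : ℝ) (hε : 0 < ε)
    (hT : (2 * (d : ℝ) + 1) * ε < T)
    (i : ℕ) (hi : i ≤ d - 1)
    (A₁ A₂ : Finset (Fin d)) (z₁ z₂ : Fin d → ℤ)
    (hA₁ : A₁.card = i) (hA₂ : A₂.card = i)
    (hne : face d T A₁ z₁ ≠ face d T A₂ z₂) :
    ε < setDist
        (linfNbhdLevel d ε i (face d T A₁ z₁) \ Blt d T ε i)
        (linfNbhdLevel d ε i (face d T A₂ z₂) \ Blt d T ε i) := by
  have hid : i < d := by omega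
  have hd0 : (0:ℝ) ≤ (d:ℝ) := Nat.cast_nonneg d
  have hT0 : 0 < T := by nlinarith
  have hidR : (i:ℝ) ≤ d := by exact_mod_cast hid.le
  have hi0 : (0:ℝ) ≤ (i:ℝ) := Nat.cast_nonneg i
  have hsqrt2 : (1:ℝ) < Real.sqrt 2 := by
    nlinarith [Real.sq_sqrt (show (0:ℝ) ≤ 2 by norm_num), Real.sqrt_nonneg 2]
  have hsqrt2' : Real.sqrt 2 ≤ 2 := by
    nlinarith [Real.sq_sqrt (show (0:ℝ) ≤ 2 by norm_num), Real.sqrt_nonneg 2]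
  set c : ℝ := min (Real.sqrt 2 * ε) (T - 2 * (d:ℝ) * ε) with hc
  have hεc : ε < c := by
    apply lt_min
    · nlinarith
    · linarith
  rw [setDist]
  refine lt_of_lt_of_le hεc (le_csInf ?_ ?_)
  · refine ⟨_, _, center_mem d ε T hε hT i hid A₁ z₁ hA₁, _,
      center_mem d ε T hε hT i hid A₂ z₂ hA₂, rfl⟩
  · rintro r ⟨x, hx, y, hy, rfl⟩
    obtain ⟨hx1, hx2⟩ := hx
    obtain ⟨hy1, hy2⟩ := hy
    have hcoord := coord_le_dist d x y
    by_cases hAA : A₁ = A₂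
    · -- same free set, some z differs
      subst hAA
      have hzz : ∃ k, z₁ k ≠ z₂ k := by
        by_contra h
        push_neg at h
        exact hne (by rw [funext h])
      obtain ⟨k, hzk⟩ := hzz
      by_cases hkA : k ∈ A₁
      · -- free coordinate, different cells
        obtain ⟨hx3, hx4⟩ := escape_interval d ε T hε hT0 i A₁ z₁ hA₁ x hx1 hx2 k hkA
        obtain ⟨hy3, hy4⟩ := escape_interval d ε T hε hT0 i A₁ z₂ hA₂ y hy1 hy2 k hkA
        have h2e : 2 * ε ≤ |x k - y k| := by
          rcases lt_or_gt_of_ne hzk with h | h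
          · have hcast : (z₁ k : ℝ) + 1 ≤ (z₂ k : ℝ) := by exact_mod_cast h
            have : 2 * ε ≤ y k - x k := by nlinarith
            rw [abs_sub_comm, abs_of_nonneg (by linarith)]
            linarith
          · have hcast : (z₂ k : ℝ) + 1 ≤ (z₁ k : ℝ) := by exact_mod_cast h
            have : 2 * ε ≤ x k - y k := by nlinarith
            rw [abs_of_nonneg (by linarith)]
            linarith
        calc c ≤ Real.sqrt 2 * ε := min_le_left _ _
          _ ≤ 2 * ε := by nlinarith
          _ ≤ |x k - y k| := h2e
          _ ≤ dist x y := hcoord k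
      · -- fixed coordinate, different values
        have e1 := fixed_close d ε T i A₁ z₁ x hx1 k hkA
        have e2 := fixed_close d ε T i A₁ z₂ y hy1 k hkA
        have hgap : T ≤ |T * (z₁ k : ℝ) - T * (z₂ k : ℝ)| := by
          have h1 : (1:ℤ) ≤ |z₁ k - z₂ k| := Int.one_le_abs (sub_ne_zero.mpr hzk)
          have h1' : (1:ℝ) ≤ |(z₁ k : ℝ) - (z₂ k : ℝ)| := by exact_mod_cast h1
          rw [← mul_sub, abs_mul, abs_of_pos hT0]
          nlinarith
        have htri : |T * (z₁ k : ℝ) - T * (z₂ k : ℝ)| ≤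
            |T * (z₁ k : ℝ) - x k| + |x k - y k| + |y k - T * (z₂ k : ℝ)| := by
          have a1 := abs_sub_le (T * (z₁ k : ℝ)) (x k) (y k)
          have a2 := abs_sub_le (T * (z₁ k : ℝ)) (y k) (T * (z₂ k : ℝ))
          linarith
        have e1' : |T * (z₁ k : ℝ) - x k| ≤ ((d:ℝ) - i) * ε := by
          rw [abs_sub_comm]; exact e1
        calc c ≤ T - 2 * (d:ℝ) * ε := min_le_right _ _
          _ ≤ |x k - y k| := by nlinarith
          _ ≤ dist x y := hcoord k
    · -- two coordinates, each differing by more than ε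
      have h12 : ∃ k ∈ A₁, k ∉ A₂ := by
        by_contra h
        push_neg at h
        exact hAA (Finset.eq_of_subset_of_card_le h (by omega))
      have h21 : ∃ k ∈ A₂, k ∉ A₁ := by
        by_contra h
        push_neg at h
        exact hAA (Finset.eq_of_subset_of_card_le h (by omega)).symm
      obtain ⟨k, hk1, hk2⟩ := h12
      obtain ⟨k', hk'2, hk'1⟩ := h21
      have hkk' : k ≠ k' := fun h => hk'1 (h ▸ hk1)
      have d1 : ε ≤ |x k - y k| := by
        have e1 := escape d ε T hε hT0 i A₁ z₁ hA₁ x hx1 hx2 k hk1 (z₂ k)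
        have e2 := fixed_close d ε T i A₂ z₂ y hy1 k hk2
        have := abs_sub_le (x k) (y k) (T * (z₂ k : ℝ))
        linarith
      have d2 : ε ≤ |x k' - y k'| := by
        have e1 := escape d ε T hε hT0 i A₂ z₂ hA₂ y hy1 hy2 k' hk'2 (z₁ k')
        have e2 := fixed_close d ε T i A₁ z₁ x hx1 k' hk'1
        have h3 := abs_sub_le (y k') (x k') (T * (z₁ k' : ℝ))
        have h4 : |y k' - x k'| = |x k' - y k'| := abs_sub_comm _ _
        linarith
      calc c ≤ Real.sqrt 2 * ε := min_le_left _ _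
        _ ≤ dist x y := two_coord_le_dist d ε hε.le x y k k' hkk' d1 d2
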